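/- arXiv:1012.5060 — 2 statements merged into one kernel-verified Lean document; each statement's English description precedes it below -/
import Mathlib

section
/- Let q, p, Ω, π : ℝ → ℝ³ satisfy q' = Ω × q, p' = Ω × p, Ω' = π, π' = -(q × p). Then Ω satisfies the NHP equation Ω''' = Ω × Ω''. -/
open Matrix

/-- The canonical equations imply the NHP equation Ω''' = Ω × Ω''. -/
theorem stmt5 (q p Ω π : ℝ → Fin 3 → ℝ)
    (hq : Differentiable ℝ q) (hp : Differentiable ℝ p)
    (hΩ : Differentiable ℝ Ω) (hπ : Differentiable ℝ π)
    (heq_q : ∀ t, deriv q t = crossProduct (Ω t) (q t))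
    (heq_p : ∀ t, deriv p t = crossProduct (Ω t) (p t))
    (heq_Ω : ∀ t, deriv Ω t = π t)
    (heq_π : ∀ t, deriv π t = -(crossProduct (q t) (p t))) :
    ∀ t, deriv (deriv (deriv Ω)) t =
      crossProduct (Ω t) (deriv (deriv Ω) t) := by
  have hΩ' : deriv Ω = π := funext heq_Ω
  have hΩ'' : deriv (deriv Ω) = fun t => -(crossProduct (q t) (p t)) := by
    rw [hΩ']; exact funext heq_π
  intro t
  rw [hΩ'']
  have hqi : ∀ i, Differentiable ℝ (fun s => q s i) := fun i =>
    differentiable_pi.mp hq i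
  have hpi : ∀ i, Differentiable ℝ (fun s => p s i) := fun i =>
    differentiable_pi.mp hp i
  have hdq : ∀ i, deriv (fun s => q s i) t = (crossProduct (Ω t) (q t)) i := by
    intro i
    have := deriv_pi (φ := q) (x := t) (fun i => (hqi i).differentiableAt)
    rw [← congrFun this i, heq_q]
  have hdp : ∀ i, deriv (fun s => p s i) t = (crossProduct (Ω t) (p t)) i := by
    intro i
    have := deriv_pi (φ := p) (x := t) (fun i => (hpi i).differentiableAt)
    rw [← congrFun this i, heq_p]
  have hcomp : ∀ i, DifferentiableAt ℝ
      (fun s => (-(crossProduct (q s) (p s))) i) t := by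
    intro i
    fin_cases i <;>
      simp only [cross_apply, Pi.neg_apply] <;>
      · apply DifferentiableAt.neg
        exact (((hqi _ t).mul (hpi _ t)).sub ((hqi _ t).mul (hpi _ t)))
  rw [deriv_pi hcomp]
  funext i
  fin_cases i <;>
    simp only [cross_apply, Pi.neg_apply, Fin.zero_eta, Fin.mk_one, Fin.reduceFinMk,
      Matrix.cons_val_zero, Matrix.cons_val_one,
      Matrix.head_cons, Matrix.cons_val_two, Matrix.tail_cons, deriv.fun_neg'] <;>
    rw [deriv_fun_sub ((hqi _ t).fun_mul (hpi _ t)) ((hqi _ t).fun_mul (hpi _ t)),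
      deriv_fun_mul (hqi _ t) (hpi _ t), deriv_fun_mul (hqi _ t) (hpi _ t)] <;>
    simp only [hdq, hdp, cross_apply, Matrix.cons_val_zero, Matrix.cons_val_one,
      Matrix.head_cons, Matrix.cons_val_two, Matrix.tail_cons] <;>
    ring
end

section
/- Let Ω, π₁, π₂ : ℝ → ℝ³ satisfy the Ostrogradsky–Lie–Poisson equations for the reduced Hamiltonian h(π₁, Ω, π₂) = ½|π₂|² + π₁ ⬝ Ω on 𝔰𝔬(3)* × T*𝔰𝔬(3) ≅ (ℝ³)³: namely π₁' = π₁ × (δh/δπ₁) = π₁ × Ω, Ω' = δh/δπ₂ = π₂, π₂' = -δh/δΩ = -π₁. Then Ω satisfies Ω''' = -(Ω × Ω''). -/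
open Matrix

/-- The Ostrogradsky–Lie–Poisson equations for h = ½|π₂|² + π₁ ⬝ Ω on
𝔰𝔬(3)* × T*𝔰𝔬(3) ≅ (ℝ³)³ imply Ω''' = -(Ω × Ω''). -/
theorem stmt17 (Ω π₁ π₂ : ℝ → Fin 3 → ℝ)
    (hΩ : Differentiable ℝ Ω) (hπ₁ : Differentiable ℝ π₁)
    (hπ₂ : Differentiable ℝ π₂)
    (h1 : ∀ t, deriv π₁ t = crossProduct (π₁ t) (Ω t))
    (h2 : ∀ t, deriv Ω t = π₂ t)
    (h3 : ∀ t, deriv π₂ t = -π₁ t) :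
    ∀ t, deriv (deriv (deriv Ω)) t =
      -(crossProduct (Ω t) (deriv (deriv Ω) t)) := by
  have hd1 : deriv Ω = π₂ := funext h2
  have hd2 : deriv (deriv Ω) = fun t => -π₁ t := by
    funext t; rw [hd1, h3]
  intro t
  rw [hd2]
  have : deriv (fun t => -π₁ t) t = -deriv π₁ t := by
    simpa using deriv_neg (f := π₁) (x := t)
  rw [this, h1, map_neg, cross_anticomm]
  simp
end
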